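/- Let n ≥ 1 and let Σ0, Σ1 be symmetric positive definite real n×n matrices. Let Σ0^{1/2} denote the unique symmetric positive definite square root of Σ0 and define A = Σ0^{−1/2} · (Σ0^{1/2} Σ1 Σ0^{1/2})^{1/2} · Σ0^{−1/2}. Then A is symmetric positive definite, A Σ0 A = Σ1, and det A = √(det Σ1 / det Σ0). -/

import Mathlib

open Matrix

private lemma psd_det_nonneg {n : ℕ} {B : Matrix (Fin n) (Fin n) ℝ}
    (hB : B.PosSemidef) : 0 ≤ B.det := by
  rw [hB.1.det_eq_prod_eigenvalues]
  exact Finset.prod_nonneg fun i _ => hB.eigenvalues_nonneg i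

private lemma posDef_of_posSemidef_det_ne_zero {n : ℕ}
    {B : Matrix (Fin n) (Fin n) ℝ} (hB : B.PosSemidef) (hd : B.det ≠ 0) :
    B.PosDef := by
  refine PosDef.of_dotProduct_mulVec_pos hB.1 fun x hx => ?_
  rcases lt_or_eq_of_le (hB.dotProduct_mulVec_nonneg x) with h | h
  · exact h
  · exfalso
    have h0 : B *ᵥ x = 0 := (hB.dotProduct_mulVec_zero_iff x).mp h.symm
    have : x = 0 := by
      calc x = B⁻¹ *ᵥ (B *ᵥ x) := by
                rw [mulVec_mulVec, nonsing_inv_mul B (isUnit_iff_ne_zero.mpr hd), one_mulVec]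
        _ = 0 := by rw [h0, mulVec_zero]
    exact hx this

/-- with covariances `Sigma0, Sigma1`, `S0 = Sigma0^{1/2}` the unique symmetric
positive semidefinite square root of `Sigma0`, `M = (Sigma0^{1/2} Sigma1 Sigma0^{1/2})^{1/2}`,
and `A = Sigma0^{-1/2} M Sigma0^{-1/2}`, the matrix `A` is symmetric positive definite,
satisfies `A Sigma0 A = Sigma1`, and `det A = √(det Sigma1 / det Sigma0)`. -/
theorem gaussian_transport_matrix_properties
    (n : ℕ) (hn : 1 ≤ n)
    (Sigma0 Sigma1 : Matrix (Fin n) (Fin n) ℝ) (hSigma0 : Sigma0.PosDef)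
    (hSigma1 : Sigma1.PosDef)
    (S0 : Matrix (Fin n) (Fin n) ℝ) (hS0 : S0.PosSemidef) (hS0sq : S0 ^ 2 = Sigma0)
    (M : Matrix (Fin n) (Fin n) ℝ) (hM : M.PosSemidef) (hMsq : M ^ 2 = S0 * Sigma1 * S0)
    (A : Matrix (Fin n) (Fin n) ℝ) (hA : A = S0⁻¹ * M * S0⁻¹) :
    A.PosDef ∧ A * Sigma0 * A = Sigma1 ∧ A.det = Real.sqrt (Sigma1.det / Sigma0.det) := by
  have hd0 : (0:ℝ) < Sigma0.det := hSigma0.det_pos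
  have hd1 : (0:ℝ) < Sigma1.det := hSigma1.det_pos
  have hS0det2 : S0.det ^ 2 = Sigma0.det := by rw [← det_pow, hS0sq]
  have hS0detpos : 0 < S0.det := by
    rcases lt_or_eq_of_le (psd_det_nonneg hS0) with h | h
    · exact h
    · exfalso; rw [← h] at hS0det2; simp at hS0det2; exact hd0.ne' hS0det2.symm
  have hS0det : S0.det ≠ 0 := hS0detpos.ne'
  have hMdet2 : M.det ^ 2 = Sigma0.det * Sigma1.det := by
    rw [← det_pow, hMsq, det_mul, det_mul]
    nlinarith [hS0det2]
  have hMdetpos : 0 < M.det := by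
    rcases lt_or_eq_of_le (psd_det_nonneg hM) with h | h
    · exact h
    · exfalso
      have h2 : (0:ℝ) < M.det ^ 2 := hMdet2 ▸ mul_pos hd0 hd1
      rw [← h] at h2; simp at h2
  have hS0unit : IsUnit S0.det := isUnit_iff_ne_zero.mpr hS0det
  have hS0inv_mul : S0⁻¹ * S0 = 1 := nonsing_inv_mul S0 hS0unit
  have hS0mul_inv : S0 * S0⁻¹ = 1 := mul_nonsing_inv S0 hS0unit
  -- A is PosSemidef via conjugation
  have hS0invH : S0⁻¹ᴴ = S0⁻¹ := by
    rw [conjTranspose_nonsing_inv, hS0.1.eq]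
  have hApsd : A.PosSemidef := by
    rw [hA]
    have := hM.mul_mul_conjTranspose_same S0⁻¹
    rwa [hS0invH] at this
  have hAdet : A.det = M.det / Sigma0.det := by
    rw [hA, det_mul, det_mul, det_nonsing_inv, ← hS0det2, Ring.inverse_eq_inv']
    rw [pow_two]
    field_simp
  have hAdetval : A.det = Real.sqrt (Sigma1.det / Sigma0.det) := by
    rw [hAdet]
    have key : (M.det / Sigma0.det) ^ 2 = Sigma1.det / Sigma0.det := by
      rw [div_pow, hMdet2, pow_two]
      field_simp
    rw [← key, Real.sqrt_sq (by positivity)]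
  refine ⟨posDef_of_posSemidef_det_ne_zero hApsd (by rw [hAdetval]; positivity), ?_, hAdetval⟩
  rw [hA, ← hS0sq]
  calc S0⁻¹ * M * S0⁻¹ * S0 ^ 2 * (S0⁻¹ * M * S0⁻¹)
      = S0⁻¹ * (M * (S0⁻¹ * S0) * ((S0 * S0⁻¹) * M)) * S0⁻¹ := by
        rw [pow_two]; noncomm_ring
    _ = S0⁻¹ * (M ^ 2) * S0⁻¹ := by rw [hS0inv_mul, hS0mul_inv, mul_one, one_mul, ← pow_two]
    _ = (S0⁻¹ * S0) * Sigma1 * (S0 * S0⁻¹) := by rw [hMsq]; noncomm_ring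
    _ = Sigma1 := by rw [hS0inv_mul, hS0mul_inv, one_mul, mul_one]
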